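/- Let S and S′ be coloring strings that are adjacent, i.e., S′ is obtained from S by exchanging one swappable pair of consecutive characters. Then inv(S) = inv(S′). -/

import Mathlib

/-- A coloring string: a string over the alphabet `{1,2,3}` (modeled as `Fin 3`)
in which consecutive characters are distinct; it encodes a proper 3-coloring of
a path. -/
def IsColoringString (S : List (Fin 3)) : Prop := S.Chain' (· ≠ ·)

/-- Two coloring strings are adjacent: one is obtained from the other by
exchanging a swappable pair of consecutive characters (i.e. the exchange yields
again a coloring string). -/
def StringStep (S S' : List (Fin 3)) : Prop :=
  IsColoringString S ∧ IsColoringString S' ∧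
    ∃ (A B : List (Fin 3)) (a b : Fin 3),
      S = A ++ a :: b :: B ∧ S' = A ++ b :: a :: B

/-- Two coloring strings are reconfigurable: they are joined by a sequence of
coloring strings in which consecutive strings are adjacent. -/
def StringReconf : List (Fin 3) → List (Fin 3) → Prop :=
  Relation.ReflTransGen StringStep

/-- The contraction operations on coloring strings:
`C1` replaces a substring `x p q x` by `x` (here the occurrence starts at
1-based position `i - 1` with `2 ≤ i ≤ n - 2`, i.e. `A` is an arbitrary prefix
and `B` an arbitrary suffix); `C2` deletes a pairwise-distinct first triple;
`C3` deletes a pairwise-distinct last triple. -/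
inductive Contract : List (Fin 3) → List (Fin 3) → Prop
  | c1 (A B : List (Fin 3)) (x p q : Fin 3) :
      Contract (A ++ x :: p :: q :: x :: B) (A ++ x :: B)
  | c2 (p q r : Fin 3) (B : List (Fin 3)) :
      p ≠ q → q ≠ r → p ≠ r → Contract (p :: q :: r :: B) B
  | c3 (A : List (Fin 3)) (p q r : Fin 3) :
      p ≠ q → q ≠ r → p ≠ r → Contract (A ++ [p, q, r]) A

/-- `S` reduces to `T` by a (possibly empty) sequence of contractions. -/
def ContractsTo : List (Fin 3) → List (Fin 3) → Prop :=
  Relation.ReflTransGen Contract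

/-- No contraction applies to `T`. -/
def IsContractNormal (T : List (Fin 3)) : Prop := ∀ U, ¬ Contract T U

/-- `T` is the invariant `inv S` of the coloring string `S`: `S` reduces by
contractions to some string `U` to which no contraction applies, and `T = U`
if `|U| ≥ 3`, while `T` is the empty string `NIL` if `|U| ≤ 2`. -/
def InvIs (S T : List (Fin 3)) : Prop :=
  ∃ U, ContractsTo S U ∧ IsContractNormal U ∧ T = if U.length ≤ 2 then [] else U

/-- adjacent coloring strings (one obtained from the other by
exchanging a swappable pair of consecutive characters) have the same invariant:
`inv S = inv S'`. -/
lemma contract_length {S U : List (Fin 3)} (h : Contract S U) : S.length = U.length + 3 := by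
  cases h <;> simp [List.length_append] <;> omega

lemma exists_normal (S : List (Fin 3)) : ∃ U, ContractsTo S U ∧ IsContractNormal U := by
  by_cases h : ∃ V, Contract S V
  · obtain ⟨V, hV⟩ := h
    have hlt : V.length < S.length := by have := contract_length hV; omega
    obtain ⟨U, hU, hN⟩ := exists_normal V
    exact ⟨U, Relation.ReflTransGen.head hV hU, hN⟩
  · exact ⟨S, Relation.ReflTransGen.refl, fun U hU => h ⟨U, hU⟩⟩
termination_by S.length

lemma common {S S' C : List (Fin 3)} (h1 : Contract S C) (h2 : Contract S' C) :
    ∃ T, InvIs S T ∧ InvIs S' T := by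
  obtain ⟨U, hCU, hN⟩ := exists_normal C
  exact ⟨_, ⟨U, Relation.ReflTransGen.head h1 hCU, hN, rfl⟩,
         ⟨U, Relation.ReflTransGen.head h2 hCU, hN, rfl⟩⟩

lemma fin3_eq : ∀ (x y a b : Fin 3), a ≠ b → x ≠ a → x ≠ b → y ≠ a → y ≠ b → x = y := by decide

theorem stmt_8 (S S' : List (Fin 3)) (h : StringStep S S') :
    ∃ T, InvIs S T ∧ InvIs S' T := by
  obtain ⟨hS, hS', A, B, a, b, rfl, rfl⟩ := h
  unfold IsColoringString at hS hS'
  rcases A.eq_nil_or_concat with rfl | ⟨A0, x, rfl⟩ <;> rcases B with _ | ⟨y, B0⟩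
  · -- [a,b] and [b,a]
    simp only [List.nil_append] at *
    refine ⟨[], ⟨[a,b], Relation.ReflTransGen.refl, ?_, by simp⟩,
            ⟨[b,a], Relation.ReflTransGen.refl, ?_, by simp⟩⟩ <;>
    · intro U hU
      have := contract_length hU
      simp at this
  · -- a::b::y::B0, c2
    simp only [List.nil_append] at *
    rw [List.Chain', List.isChain_cons_cons] at hS hS'
    obtain ⟨hab, hS⟩ := hS
    obtain ⟨hba, hS'⟩ := hS'
    rw [List.isChain_cons_cons] at hS hS'
    exact common (Contract.c2 a b y B0 hab hS.1 hS'.1)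
      (Contract.c2 b a y B0 hba hS'.1 hS.1)
  · -- A0 ++ [x,a,b], c3
    simp only [List.concat_eq_append, List.append_assoc, List.singleton_append] at hS hS' ⊢
    have hsuf : (x :: a :: b :: List.nil).Chain' (· ≠ ·) :=
      hS.suffix ⟨A0, rfl⟩
    have hsuf' : (x :: b :: a :: List.nil).Chain' (· ≠ ·) :=
      hS'.suffix ⟨A0, rfl⟩
    rw [List.Chain', List.isChain_cons_cons, List.isChain_cons_cons] at hsuf hsuf'
    exact common (Contract.c3 A0 x a b hsuf.1 hsuf.2.1 hsuf'.1)
      (Contract.c3 A0 x b a hsuf'.1 hsuf'.2.1 hsuf.1)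
  · -- middle case, c1
    simp only [List.concat_eq_append, List.append_assoc, List.singleton_append] at hS hS' ⊢
    have hsuf : (x :: a :: b :: y :: B0).Chain' (· ≠ ·) := hS.suffix ⟨A0, rfl⟩
    have hsuf' : (x :: b :: a :: y :: B0).Chain' (· ≠ ·) := hS'.suffix ⟨A0, rfl⟩
    rw [List.Chain', List.isChain_cons_cons] at hsuf hsuf'
    have hxa := hsuf.1
    have hxb := hsuf'.1
    rw [List.isChain_cons_cons] at hsuf hsuf'
    have hab := hsuf.2.1
    rw [List.isChain_cons_cons] at hsuf hsuf'
    have hby := hsuf.2.2.1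
    have hay := hsuf'.2.2.1
    have hxy : x = y := fin3_eq x y a b hab hxa hxb (Ne.symm hay) (Ne.symm hby)
    subst hxy
    exact common (Contract.c1 A0 B0 x a b) (Contract.c1 A0 B0 x b a)
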